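/- (Main Integration Lemma) Let Ψ : ℝ^D → ℝ be convex and differentiable, with differentiable convex conjugate Ψ̄, and let x₀, x₁ ∈ ℝ^D. Suppose for each t ∈ (0,1) there exists z₀(t) with (1−t)z₀(t) + t∇Ψ(z₀(t)) = (1−t)x₀ + t·x₁, and define u_t^Ψ(x_t) := ∇Ψ(z₀(t)) − z₀(t). Then ∫₀¹ ‖u_t^Ψ(x_t) − (x₁ − x₀)‖² dt = 2·[Ψ(x₀) + Ψ̄(x₁) − ⟨x₀, x₁⟩]. -/

import Mathlib

open Set Filter Topology MeasureTheory InnerProductSpace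

variable {E : Type*} [NormedAddCommGroup E] [InnerProductSpace ℝ E] [CompleteSpace E]

local notation "⟪" x ", " y "⟫" => @inner ℝ _ _ x y

/-- Gradient inequality for convex functions. -/
lemma my_grad_ineq {f : E → ℝ} (hconv : ConvexOn ℝ univ f) {G x : E}
    (hf : HasGradientAt f G x) (w : E) :
    f x + ⟪G, w - x⟫ ≤ f w := by
  rcases eq_or_ne w x with rfl | hne
  · simp
  · set c : ℝ →ᵃ[ℝ] E := AffineMap.lineMap x w with hc
    have hcv : ConvexOn ℝ univ (f ∘ c) := by
      simpa using hconv.comp_affineMap c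
    have hc0 : c 0 = x := by simp [hc]
    have hc1 : c 1 = w := by simp [hc]
    have hder : HasDerivAt (f ∘ c) ⟪G, w - x⟫ 0 := by
      have hline : HasDerivAt (fun s : ℝ => c s) (w - x) 0 := by
        have : HasDerivAt (fun s : ℝ => s • (w - x) + x) ((1:ℝ) • (w - x)) 0 :=
          ((hasDerivAt_id (0:ℝ)).smul_const (w - x)).add_const x
        simpa [hc, AffineMap.lineMap_apply] using this
      have hfd : HasFDerivAt f (toDual ℝ E G) (c 0) := hc0 ▸ (hf : HasFDerivAt f (toDual ℝ E G) x)
      have := hfd.comp_hasDerivAt 0 hline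
      simpa [toDual_apply_apply] using this
    have := hcv.le_slope_of_hasDerivAt (mem_univ (0:ℝ)) (mem_univ (1:ℝ)) zero_lt_one hder
    rw [slope_def_field] at this
    simp only [hc0, hc1, Function.comp_apply, sub_zero, div_one] at this
    linarith

set_option maxHeartbeats 1000000
section Fenchel
variable {Ψ Ψc : E → ℝ} {g gc : E → E}

lemma my_fenchel (hconv : ConvexOn ℝ univ Ψ) (hg : ∀ z, HasGradientAt Ψ (g z) z)
    (hconj : ∀ y, IsLUB (range fun z => ⟪y, z⟫ - Ψ z) (Ψc y)) (u : E) :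
    Ψc (g u) = ⟪g u, u⟫ - Ψ u := by
  refine le_antisymm ((hconj (g u)).2 ?_) ((hconj (g u)).1 ⟨u, rfl⟩)
  rintro _ ⟨w, rfl⟩
  have h1 := my_grad_ineq hconv (hg u) w
  have h2 : ⟪g u, w - u⟫ = ⟪g u, w⟫ - ⟪g u, u⟫ := inner_sub_right _ _ _
  simp only [ge_iff_le]
  linarith

lemma my_conj_convex (hconj : ∀ y, IsLUB (range fun z => ⟪y, z⟫ - Ψ z) (Ψc y)) :
    ConvexOn ℝ univ Ψc := by
  refine ⟨convex_univ, fun u _ v _ a b ha hb hab => ?_⟩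
  refine (hconj _).2 ?_
  rintro _ ⟨w, rfl⟩
  have h1 : ⟪u, w⟫ - Ψ w ≤ Ψc u := (hconj u).1 ⟨w, rfl⟩
  have h2 : ⟪v, w⟫ - Ψ w ≤ Ψc v := (hconj v).1 ⟨w, rfl⟩
  have e : ⟪a • u + b • v, w⟫ = a * ⟪u, w⟫ + b * ⟪v, w⟫ := by
    simp [inner_add_left, real_inner_smul_left]
  have h3 := mul_le_mul_of_nonneg_left h1 ha
  have h4 := mul_le_mul_of_nonneg_left h2 hb
  have hab' : a * Ψ w + b * Ψ w = Ψ w := by rw [← add_mul, hab, one_mul]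
  simp only [smul_eq_mul]
  ring_nf at h3 h4 e ⊢
  linarith [h3, h4, e, hab']

lemma my_gc_g (hconv : ConvexOn ℝ univ Ψ) (hg : ∀ z, HasGradientAt Ψ (g z) z)
    (hconj : ∀ y, IsLUB (range fun z => ⟪y, z⟫ - Ψ z) (Ψc y))
    (hgc : ∀ y, HasGradientAt Ψc (gc y) y) (u : E) :
    gc (g u) = u := by
  set y := g u with hy
  have hsub : ∀ w, ⟪w - y, u⟫ ≤ Ψc w - Ψc y := by
    intro w
    have h1 : ⟪w, u⟫ - Ψ u ≤ Ψc w := (hconj w).1 ⟨u, rfl⟩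
    have h2 : Ψc y = ⟪y, u⟫ - Ψ u := my_fenchel hconv hg hconj u
    have h3 : ⟪w - y, u⟫ = ⟪w, u⟫ - ⟪y, u⟫ := inner_sub_left _ _ _
    linarith
  have hr0 : u - gc y = 0 := by
    by_contra hne
    set r : E := u - gc y with hr
    have hrpos : (0:ℝ) < ‖r‖ := norm_pos_iff.2 hne
    have ho : (fun w => Ψc w - Ψc y - ⟪gc y, w - y⟫) =o[𝓝 y] fun w => w - y :=
      hasGradientAt_iff_isLittleO.1 (hgc y)
    have hpath : Tendsto (fun s : ℝ => y + s • r) (𝓝 0) (𝓝 y) := by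
      have : Continuous (fun s : ℝ => y + s • r) :=
        continuous_const.add (continuous_id.smul continuous_const)
      simpa using this.tendsto 0
    have ho2 := (ho.comp_tendsto hpath).def (by positivity : (0:ℝ) < ‖r‖/2)
    rw [Metric.eventually_nhds_iff] at ho2
    obtain ⟨δ, hδ, hb⟩ := ho2
    set s := δ/2 with hs
    have hspos : (0:ℝ) < s := by positivity
    have hsd : dist s (0:ℝ) < δ := by
      rw [Real.dist_eq, sub_zero, abs_of_pos hspos]; simp [hs]; linarith
    have hbs := hb hsd
    simp only [Function.comp_apply, add_sub_cancel_left] at hbs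
    have h4 : ⟪s • r, u⟫ ≤ Ψc (y + s • r) - Ψc y := by
      have := hsub (y + s • r)
      simpa [add_sub_cancel_left] using this
    have h5 : ⟪s • r, u⟫ = s * ⟪r, u⟫ := real_inner_smul_left _ _ _
    have h6 : ⟪gc y, s • r⟫ = s * ⟪gc y, r⟫ := real_inner_smul_right _ _ _
    have h7 : ⟪r, u⟫ - ⟪gc y, r⟫ = ‖r‖^2 := by
      have e1 : ⟪gc y, r⟫ = ⟪r, gc y⟫ := real_inner_comm _ _
      have e2 : ⟪r, u⟫ - ⟪r, gc y⟫ = ⟪r, u - gc y⟫ := (inner_sub_right _ _ _).symm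
      have e3 : ⟪r, u - gc y⟫ = ‖r‖^2 := by
        rw [← hr]; exact real_inner_self_eq_norm_sq r
      rw [e1, e2, e3]
    have hlow : s * ‖r‖^2 ≤ Ψc (y + s • r) - Ψc y - ⟪gc y, s • r⟫ := by
      have h7s : s * ‖r‖^2 = s * ⟪r, u⟫ - s * ⟪gc y, r⟫ := by rw [← h7]; ring
      rw [h7s, h6]; linarith [h4, h5]
    have h8 : ‖s • r‖ = s * ‖r‖ := by
      rw [norm_smul, Real.norm_eq_abs, abs_of_pos hspos]
    have h9 : Ψc (y + s • r) - Ψc y - ⟪gc y, s • r⟫ ≤ ‖r‖/2 * (s * ‖r‖) := by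
      calc Ψc (y + s • r) - Ψc y - ⟪gc y, s • r⟫
          ≤ |Ψc (y + s • r) - Ψc y - ⟪gc y, s • r⟫| := le_abs_self _
        _ ≤ ‖r‖/2 * (s * ‖r‖) := by rw [← h8, ← Real.norm_eq_abs]; exact hbs
    have hcon : s * ‖r‖^2 ≤ ‖r‖/2 * (s * ‖r‖) := le_trans hlow h9
    nlinarith [hcon, mul_pos hspos (mul_pos hrpos hrpos)]
  have := sub_eq_zero.1 hr0
  exact this.symm

end Fenchel
/-- value of the affine-in-`t` function whose envelope we study -/
def envf (A B : E → ℝ) (x₀ x₁ u : E) (t : ℝ) : ℝ :=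
  (1 - t) * (⟪x₀, u⟫ - A u) + t * (⟪x₁, u⟫ - B u)

/-- the slope selection -/
def envS (A B : E → ℝ) (x₀ x₁ : E) (w : ℝ → E) (t : ℝ) : ℝ :=
  (⟪x₁, w t⟫ - B (w t)) - (⟪x₀, w t⟫ - A (w t))

/-- the envelope along the maximizer selection `w` -/
def envF (A B : E → ℝ) (x₀ x₁ : E) (w : ℝ → E) (t : ℝ) : ℝ :=
  envf A B x₀ x₁ (w t) t

section Envelope

variable {A B : E → ℝ} {GA GB : E → E} {α β : ℝ} {w : ℝ → E} {x₀ x₁ : E}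

lemma env_sup (hA : ∀ u v, A u + ⟪GA u, v - u⟫ + α/2 * ‖v - u‖^2 ≤ A v)
    (hB : ∀ u v, B u + ⟪GB u, v - u⟫ + β/2 * ‖v - u‖^2 ≤ B v)
    (hw : ∀ t ∈ Ioo (0:ℝ) 1, (1-t) • GA (w t) + t • GB (w t) = (1-t) • x₀ + t • x₁)
    {t : ℝ} (ht : t ∈ Ioo (0:ℝ) 1) (u : E) :
    envf A B x₀ x₁ u t + ((1-t)*α + t*β)/2 * ‖u - w t‖^2 ≤ envF A B x₀ x₁ w t := by
  obtain ⟨ht0, ht1⟩ := ht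
  have h1 := hA (w t) u
  have h2 := hB (w t) u
  have e : (1-t) * ⟪GA (w t), u - w t⟫ + t * ⟪GB (w t), u - w t⟫
      = ((1-t) * ⟪x₀, u⟫ + t * ⟪x₁, u⟫) - ((1-t) * ⟪x₀, w t⟫ + t * ⟪x₁, w t⟫) := by
    have e1 : (1-t) * ⟪GA (w t), u - w t⟫ + t * ⟪GB (w t), u - w t⟫
        = ⟪(1-t) • GA (w t) + t • GB (w t), u - w t⟫ := by
      rw [inner_add_left, real_inner_smul_left, real_inner_smul_left]
    rw [e1, hw t ⟨ht0, ht1⟩, inner_add_left, real_inner_smul_left, real_inner_smul_left,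
      inner_sub_right, inner_sub_right]
    ring
  have h1' := mul_le_mul_of_nonneg_left h1 (by linarith : (0:ℝ) ≤ 1 - t)
  have h2' := mul_le_mul_of_nonneg_left h2 (le_of_lt ht0)
  unfold envF envf
  nlinarith [h1', h2', e]

lemma env_support (hA : ∀ u v, A u + ⟪GA u, v - u⟫ + α/2 * ‖v - u‖^2 ≤ A v)
    (hB : ∀ u v, B u + ⟪GB u, v - u⟫ + β/2 * ‖v - u‖^2 ≤ B v)
    (hw : ∀ t ∈ Ioo (0:ℝ) 1, (1-t) • GA (w t) + t • GB (w t) = (1-t) • x₀ + t • x₁)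
    (hα : 0 ≤ α) (hβ : 0 ≤ β)
    {t : ℝ} (ht : t ∈ Ioo (0:ℝ) 1) {t' : ℝ} (ht' : t' ∈ Ioo (0:ℝ) 1) :
    envF A B x₀ x₁ w t + (t' - t) * envS A B x₀ x₁ w t ≤ envF A B x₀ x₁ w t' := by
  have hsup := env_sup hA hB hw ht' (w t)
  have hq : 0 ≤ ((1-t')*α + t'*β)/2 * ‖w t - w t'‖^2 := by
    have : (0:ℝ) ≤ (1-t')*α + t'*β := by
      have := mul_nonneg (by linarith [ht'.2] : (0:ℝ) ≤ 1 - t') hα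
      have := mul_nonneg (le_of_lt ht'.1) hβ
      linarith
    positivity
  have haff : envf A B x₀ x₁ (w t) t' = envF A B x₀ x₁ w t + (t' - t) * envS A B x₀ x₁ w t := by
    unfold envF envf envS; ring
  linarith

lemma env_mono (hA : ∀ u v, A u + ⟪GA u, v - u⟫ + α/2 * ‖v - u‖^2 ≤ A v)
    (hB : ∀ u v, B u + ⟪GB u, v - u⟫ + β/2 * ‖v - u‖^2 ≤ B v)
    (hw : ∀ t ∈ Ioo (0:ℝ) 1, (1-t) • GA (w t) + t • GB (w t) = (1-t) • x₀ + t • x₁)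
    (hα : 0 ≤ α) (hβ : 0 ≤ β)
    {t t' : ℝ} (ht : t ∈ Ioo (0:ℝ) 1) (ht' : t' ∈ Ioo (0:ℝ) 1) (htt' : t ≤ t') :
    envS A B x₀ x₁ w t ≤ envS A B x₀ x₁ w t' := by
  rcases eq_or_lt_of_le htt' with rfl | hlt
  · exact le_rfl
  · have h1 := env_support hA hB hw hα hβ ht ht'
    have h2 := env_support hA hB hw hα hβ ht' ht
    nlinarith [h1, h2, hlt]

lemma env_w_cont (hA : ∀ u v, A u + ⟪GA u, v - u⟫ + α/2 * ‖v - u‖^2 ≤ A v)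
    (hB : ∀ u v, B u + ⟪GB u, v - u⟫ + β/2 * ‖v - u‖^2 ≤ B v)
    (hw : ∀ t ∈ Ioo (0:ℝ) 1, (1-t) • GA (w t) + t • GB (w t) = (1-t) • x₀ + t • x₁)
    (hα : 0 ≤ α) (hβ : 0 ≤ β) (hμ : ∀ t ∈ Ioo (0:ℝ) 1, 0 < (1-t)*α + t*β)
    {t : ℝ} (ht : t ∈ Ioo (0:ℝ) 1) : ContinuousAt w t := by
  obtain ⟨ht0, ht1⟩ := ht
  set tm := t/2 with htm_def
  set tp := (t+1)/2 with htp_def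
  have hm : tm ∈ Ioo (0:ℝ) 1 := ⟨by simp [htm_def]; linarith, by simp [htm_def]; linarith⟩
  have hp : tp ∈ Ioo (0:ℝ) 1 := ⟨by simp [htp_def]; linarith, by simp [htp_def]; linarith⟩
  have htm : tm < t := by simp [htm_def]; linarith
  have htp : t < tp := by simp [htp_def]; linarith
  set S := envS A B x₀ x₁ w with hS_def
  set R := S tp - S tm with hR_def
  have hRnn : 0 ≤ R := sub_nonneg.2 (env_mono hA hB hw hα hβ hm hp (le_of_lt (htm.trans htp)))
  set μt := (1-t)*α + t*β with hμt_def
  have hμt : 0 < μt := hμ t ⟨ht0, ht1⟩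
  have key : ∀ t' ∈ Ioo tm tp, ‖w t' - w t‖^2 ≤ (4*R/μt) * |t' - t| := by
    intro t' ht'
    have ht'01 : t' ∈ Ioo (0:ℝ) 1 := ⟨lt_trans hm.1 ht'.1, lt_trans ht'.2 hp.2⟩
    have hsup := env_sup hA hB hw ht'01 (w t)
    have haff : envf A B x₀ x₁ (w t) t'
        = envF A B x₀ x₁ w t + (t' - t) * S t := by
      rw [hS_def]; unfold envF envf envS; ring
    have hsupp2 := env_support hA hB hw hα hβ ht'01 (⟨ht0, ht1⟩ : t ∈ Ioo (0:ℝ) 1)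
    simp only [← hS_def] at hsupp2
    -- hsupp2 : F t' + (t - t') * S t' ≤ F t
    have hμ' : μt/2 ≤ (1-t')*α + t'*β := by
      have h1 : (1 - tp) * α ≤ (1-t')*α := mul_le_mul_of_nonneg_right (by linarith [ht'.2]) hα
      have h2 : tm * β ≤ t'*β := mul_le_mul_of_nonneg_right (le_of_lt ht'.1) hβ
      have : μt/2 = (1 - tp) * α + tm * β := by
        rw [hμt_def, htp_def, htm_def]; ring
      linarith
    have hS1 : S t' ≤ S tp := env_mono hA hB hw hα hβ ht'01 hp (le_of_lt ht'.2)
    have hS2 : S tm ≤ S t' := env_mono hA hB hw hα hβ hm ht'01 (le_of_lt ht'.1)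
    have hS3 : S tm ≤ S t := env_mono hA hB hw hα hβ hm ⟨ht0, ht1⟩ (le_of_lt htm)
    have hS4 : S t ≤ S tp := env_mono hA hB hw hα hβ ⟨ht0, ht1⟩ hp (le_of_lt htp)
    have hq : ((1-t')*α + t'*β)/2 * ‖w t - w t'‖^2 ≤ (t' - t)*(S t' - S t) := by
      ring_nf at hsup haff hsupp2 ⊢
      linarith [hsup, haff, hsupp2]
    have hbound : (t' - t)*(S t' - S t) ≤ |t' - t| * R := by
      rcases le_total t t' with h | h
      · rw [abs_of_nonneg (by linarith)]
        nlinarith [mul_le_mul_of_nonneg_left (show S t' - S t ≤ R by rw [hR_def]; linarith)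
          (show (0:ℝ) ≤ t' - t by linarith)]
      · rw [abs_of_nonpos (by linarith)]
        nlinarith [mul_le_mul_of_nonneg_left (show S t - S t' ≤ R by rw [hR_def]; linarith)
          (show (0:ℝ) ≤ t - t' by linarith)]
    have hn : (0:ℝ) ≤ ‖w t - w t'‖^2 := sq_nonneg _
    have e1 := mul_le_mul_of_nonneg_right hμ' hn
    have hrev : ‖w t' - w t‖^2 = ‖w t - w t'‖^2 := by rw [norm_sub_rev]
    rw [hrev, div_mul_eq_mul_div, le_div_iff₀ hμt]
    ring_nf at e1 hq hbound ⊢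
    linarith [e1, hq, hbound]
  have hKnn : (0:ℝ) ≤ 4*R/μt := by positivity
  have hev : ∀ᶠ t' in 𝓝 t, ‖w t' - w t‖ ≤ Real.sqrt ((4*R/μt) * |t' - t|) := by
    filter_upwards [Ioo_mem_nhds htm htp] with t' ht'
    rw [← Real.sqrt_sq (norm_nonneg (w t' - w t))]
    exact Real.sqrt_le_sqrt (key t' ht')
  have hg : Tendsto (fun t' => Real.sqrt ((4*R/μt) * |t' - t|)) (𝓝 t) (𝓝 0) := by
    have hc : Continuous (fun t' : ℝ => Real.sqrt ((4*R/μt) * |t' - t|)) := by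
      apply Real.continuous_sqrt.comp
      exact continuous_const.mul (continuous_id.sub continuous_const).abs
    have := hc.tendsto t
    simpa using this
  have hnorm : Tendsto (fun t' => ‖w t' - w t‖) (𝓝 t) (𝓝 0) :=
    squeeze_zero' (Eventually.of_forall fun _ => norm_nonneg _) hev hg
  rw [ContinuousAt]
  exact tendsto_iff_norm_sub_tendsto_zero.2 hnorm

lemma env_hasDerivAt (hA : ∀ u v, A u + ⟪GA u, v - u⟫ + α/2 * ‖v - u‖^2 ≤ A v)
    (hB : ∀ u v, B u + ⟪GB u, v - u⟫ + β/2 * ‖v - u‖^2 ≤ B v)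
    (hw : ∀ t ∈ Ioo (0:ℝ) 1, (1-t) • GA (w t) + t • GB (w t) = (1-t) • x₀ + t • x₁)
    (hα : 0 ≤ α) (hβ : 0 ≤ β) (hμ : ∀ t ∈ Ioo (0:ℝ) 1, 0 < (1-t)*α + t*β)
    (hAc : Continuous A) (hBc : Continuous B)
    {t : ℝ} (ht : t ∈ Ioo (0:ℝ) 1) :
    HasDerivAt (envF A B x₀ x₁ w) (envS A B x₀ x₁ w t) t := by
  have hScont : ContinuousAt (envS A B x₀ x₁ w) t := by
    have hwc : ContinuousAt w t := env_w_cont hA hB hw hα hβ hμ ht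
    have h1 : Continuous (fun u : E => (⟪x₁, u⟫ - B u) - (⟪x₀, u⟫ - A u)) := by
      apply Continuous.sub
      · exact (continuous_const.inner continuous_id).sub hBc
      · exact (continuous_const.inner continuous_id).sub hAc
    exact (h1.continuousAt).comp hwc
  rw [hasDerivAt_iff_isLittleO, Asymptotics.isLittleO_iff]
  intro c hc
  have hev1 : ∀ᶠ t' in 𝓝 t, |envS A B x₀ x₁ w t' - envS A B x₀ x₁ w t| < c := by
    have := Metric.tendsto_nhds.1 hScont c hc
    simpa [Real.dist_eq] using this
  filter_upwards [hev1, Ioo_mem_nhds ht.1 ht.2] with t' h1 h2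
  have hs1 := env_support hA hB hw hα hβ ht h2
  have hs2 := env_support hA hB hw hα hβ h2 ht
  have habs : |envF A B x₀ x₁ w t' - envF A B x₀ x₁ w t - (t' - t) * envS A B x₀ x₁ w t|
      ≤ |t' - t| * |envS A B x₀ x₁ w t' - envS A B x₀ x₁ w t| := by
    rw [abs_of_nonneg (by linarith)]
    calc envF A B x₀ x₁ w t' - envF A B x₀ x₁ w t - (t' - t) * envS A B x₀ x₁ w t
        ≤ (t' - t) * envS A B x₀ x₁ w t' - (t' - t) * envS A B x₀ x₁ w t := by linarith
      _ = (t' - t) * (envS A B x₀ x₁ w t' - envS A B x₀ x₁ w t) := by ring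
      _ ≤ |(t' - t) * (envS A B x₀ x₁ w t' - envS A B x₀ x₁ w t)| := le_abs_self _
      _ = |t' - t| * |envS A B x₀ x₁ w t' - envS A B x₀ x₁ w t| := abs_mul _ _
  rw [Real.norm_eq_abs, Real.norm_eq_abs, smul_eq_mul]
  calc |envF A B x₀ x₁ w t' - envF A B x₀ x₁ w t - (t' - t) * envS A B x₀ x₁ w t|
      ≤ |t' - t| * |envS A B x₀ x₁ w t' - envS A B x₀ x₁ w t| := habs
    _ ≤ |t' - t| * c := mul_le_mul_of_nonneg_left (le_of_lt h1) (abs_nonneg _)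
    _ = c * |t' - t| := mul_comm _ _

lemma env_tendsto_zero (hA : ∀ u v, A u + ⟪GA u, v - u⟫ + α/2 * ‖v - u‖^2 ≤ A v)
    (hB : ∀ u v, B u + ⟪GB u, v - u⟫ + β/2 * ‖v - u‖^2 ≤ B v)
    (hw : ∀ t ∈ Ioo (0:ℝ) 1, (1-t) • GA (w t) + t • GB (w t) = (1-t) • x₀ + t • x₁)
    (hα : 0 ≤ α) (hβ : 0 ≤ β) {MA MB : ℝ}
    (hMA : ∀ u, ⟪x₀, u⟫ - A u ≤ MA) (hMA' : ∀ c < MA, ∃ u, c < ⟪x₀, u⟫ - A u)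
    (hMB : ∀ u, ⟪x₁, u⟫ - B u ≤ MB) :
    Tendsto (envF A B x₀ x₁ w) (𝓝[Ioo (0:ℝ) 1] 0) (𝓝 MA) := by
  rw [tendsto_order]
  constructor
  · intro c hc
    obtain ⟨u, hu⟩ := hMA' c hc
    have hcont : Tendsto (fun t => envf A B x₀ x₁ u t) (𝓝[Ioo (0:ℝ) 1] 0)
        (𝓝 (⟪x₀, u⟫ - A u)) := by
      have h1 : Continuous (fun t => envf A B x₀ x₁ u t) := by
        unfold envf; continuity
      have h2' : Tendsto (fun t => envf A B x₀ x₁ u t) (𝓝[Ioo (0:ℝ) 1] 0)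
          (𝓝 (envf A B x₀ x₁ u 0)) := (h1.tendsto 0).mono_left nhdsWithin_le_nhds
      simpa [envf] using h2'
    filter_upwards [hcont.eventually_const_lt hu, self_mem_nhdsWithin] with t h1 h2
    have hle : envf A B x₀ x₁ u t ≤ envF A B x₀ x₁ w t := by
      have hsup := env_sup hA hB hw h2 u
      have hq : 0 ≤ ((1-t)*α + t*β)/2 * ‖u - w t‖^2 := by
        have : (0:ℝ) ≤ (1-t)*α + t*β := by
          have := mul_nonneg (by linarith [h2.2] : (0:ℝ) ≤ 1 - t) hα
          have := mul_nonneg (le_of_lt h2.1) hβ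
          linarith
        positivity
      linarith
    exact lt_of_lt_of_le h1 hle
  · intro c hc
    have hcont : Tendsto (fun t : ℝ => (1-t)*MA + t*MB) (𝓝[Ioo (0:ℝ) 1] 0) (𝓝 MA) := by
      have h1 : Continuous (fun t : ℝ => (1-t)*MA + t*MB) := by continuity
      have h2' : Tendsto (fun t : ℝ => (1-t)*MA + t*MB) (𝓝[Ioo (0:ℝ) 1] 0)
          (𝓝 ((1-(0:ℝ))*MA + 0*MB)) := (h1.tendsto 0).mono_left nhdsWithin_le_nhds
      simpa using h2'
    filter_upwards [hcont.eventually_lt_const hc, self_mem_nhdsWithin] with t h1 h2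
    have hle : envF A B x₀ x₁ w t ≤ (1-t)*MA + t*MB := by
      unfold envF envf
      have e1 := mul_le_mul_of_nonneg_left (hMA (w t)) (by linarith [h2.2] : (0:ℝ) ≤ 1 - t)
      have e2 := mul_le_mul_of_nonneg_left (hMB (w t)) (le_of_lt h2.1)
      linarith
    linarith

lemma env_tendsto_one (hA : ∀ u v, A u + ⟪GA u, v - u⟫ + α/2 * ‖v - u‖^2 ≤ A v)
    (hB : ∀ u v, B u + ⟪GB u, v - u⟫ + β/2 * ‖v - u‖^2 ≤ B v)
    (hw : ∀ t ∈ Ioo (0:ℝ) 1, (1-t) • GA (w t) + t • GB (w t) = (1-t) • x₀ + t • x₁)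
    (hα : 0 ≤ α) (hβ : 0 ≤ β) {MA MB : ℝ}
    (hMA : ∀ u, ⟪x₀, u⟫ - A u ≤ MA) (hMB : ∀ u, ⟪x₁, u⟫ - B u ≤ MB)
    (hMB' : ∀ c < MB, ∃ u, c < ⟪x₁, u⟫ - B u) :
    Tendsto (envF A B x₀ x₁ w) (𝓝[Ioo (0:ℝ) 1] 1) (𝓝 MB) := by
  rw [tendsto_order]
  constructor
  · intro c hc
    obtain ⟨u, hu⟩ := hMB' c hc
    have hcont : Tendsto (fun t => envf A B x₀ x₁ u t) (𝓝[Ioo (0:ℝ) 1] 1)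
        (𝓝 (⟪x₁, u⟫ - B u)) := by
      have h1 : Continuous (fun t => envf A B x₀ x₁ u t) := by
        unfold envf; continuity
      have h2' : Tendsto (fun t => envf A B x₀ x₁ u t) (𝓝[Ioo (0:ℝ) 1] 1)
          (𝓝 (envf A B x₀ x₁ u 1)) := (h1.tendsto 1).mono_left nhdsWithin_le_nhds
      simpa [envf] using h2'
    filter_upwards [hcont.eventually_const_lt hu, self_mem_nhdsWithin] with t h1 h2
    have hle : envf A B x₀ x₁ u t ≤ envF A B x₀ x₁ w t := by
      have hsup := env_sup hA hB hw h2 u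
      have hq : 0 ≤ ((1-t)*α + t*β)/2 * ‖u - w t‖^2 := by
        have : (0:ℝ) ≤ (1-t)*α + t*β := by
          have := mul_nonneg (by linarith [h2.2] : (0:ℝ) ≤ 1 - t) hα
          have := mul_nonneg (le_of_lt h2.1) hβ
          linarith
        positivity
      linarith
    exact lt_of_lt_of_le h1 hle
  · intro c hc
    have hcont : Tendsto (fun t : ℝ => (1-t)*MA + t*MB) (𝓝[Ioo (0:ℝ) 1] 1) (𝓝 MB) := by
      have h1 : Continuous (fun t : ℝ => (1-t)*MA + t*MB) := by continuity
      have h2' : Tendsto (fun t : ℝ => (1-t)*MA + t*MB) (𝓝[Ioo (0:ℝ) 1] 1)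
          (𝓝 ((1-(1:ℝ))*MA + 1*MB)) := (h1.tendsto 1).mono_left nhdsWithin_le_nhds
      simpa using h2'
    filter_upwards [hcont.eventually_lt_const hc, self_mem_nhdsWithin] with t h1 h2
    have hle : envF A B x₀ x₁ w t ≤ (1-t)*MA + t*MB := by
      unfold envF envf
      have e1 := mul_le_mul_of_nonneg_left (hMA (w t)) (by linarith [h2.2] : (0:ℝ) ≤ 1 - t)
      have e2 := mul_le_mul_of_nonneg_left (hMB (w t)) (le_of_lt h2.1)
      linarith
    linarith

end Envelope
/-- Main Integration Lemma: for convex differentiable `Ψ` (gradient `g`) with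
differentiable convex conjugate `Ψc` (gradient `gc`), if `z₀ t` solves
`(1−t)z₀(t) + t∇Ψ(z₀(t)) = (1−t)x₀ + tx₁` for each `t ∈ (0,1)`, then
`∫₀¹ ‖u_t^Ψ(x_t) − (x₁−x₀)‖² dt = 2[Ψ(x₀) + Ψc(x₁) − ⟪x₀,x₁⟫]`,
where `u_t^Ψ(x_t) = ∇Ψ(z₀(t)) − z₀(t)`. -/
theorem stmt_6 {D : ℕ} (Ψ Ψc : EuclideanSpace ℝ (Fin D) → ℝ)
    (g gc : EuclideanSpace ℝ (Fin D) → EuclideanSpace ℝ (Fin D))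
    (hconv : ConvexOn ℝ Set.univ Ψ)
    (hg : ∀ z, HasGradientAt Ψ (g z) z)
    (hconj : ∀ y, IsLUB (Set.range fun z => (inner ℝ y z : ℝ) - Ψ z) (Ψc y))
    (hgc : ∀ y, HasGradientAt Ψc (gc y) y)
    (x₀ x₁ : EuclideanSpace ℝ (Fin D))
    (z₀ : ℝ → EuclideanSpace ℝ (Fin D))
    (hz : ∀ t ∈ Set.Ioo (0:ℝ) 1,
      (1 - t) • z₀ t + t • g (z₀ t) = (1 - t) • x₀ + t • x₁) :
    ∫ t in (0:ℝ)..1, ‖(g (z₀ t) - z₀ t) - (x₁ - x₀)‖ ^ 2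
      = 2 * (Ψ x₀ + Ψc x₁ - (inner ℝ x₀ x₁ : ℝ)) := by
  classical
  let q : ℝ → ℝ := fun t => ‖(g (z₀ t) - z₀ t) - (x₁ - x₀)‖ ^ 2
  have hqdef : q = fun t => ‖(g (z₀ t) - z₀ t) - (x₁ - x₀)‖ ^ 2 := rfl
  -- basic continuity facts
  have hΨcont : Continuous Ψ := continuous_iff_continuousAt.2 fun z =>
    ((hg z).differentiableAt).continuousAt
  have hΨccont : Continuous Ψc := continuous_iff_continuousAt.2 fun z =>
    ((hgc z).differentiableAt).continuousAt
  have hΨcconv : ConvexOn ℝ Set.univ Ψc := my_conj_convex hconj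
  have hfen : ∀ u : EuclideanSpace ℝ (Fin D), Ψc (g u) = ⟪g u, u⟫ - Ψ u := my_fenchel hconv hg hconj
  have hgcg : ∀ u : EuclideanSpace ℝ (Fin D), gc (g u) = u := my_gc_g hconv hg hconj hgc
  -- case 1 data
  let A₁ : EuclideanSpace ℝ (Fin D) → ℝ := fun u => ‖u‖^2/2
  have hA₁def : A₁ = fun u => ‖u‖^2/2 := rfl
  let B₁ : EuclideanSpace ℝ (Fin D) → ℝ := Ψ
  have hB₁def : B₁ = Ψ := rfl
  have hsq : ∀ u v : EuclideanSpace ℝ (Fin D), ‖u‖^2/2 + ⟪u, v - u⟫ + (1:ℝ)/2 * ‖v - u‖^2 ≤ ‖v‖^2/2 := by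
    intro u v
    have h1 : ‖v - u‖^2 = ‖v‖^2 - 2*⟪v, u⟫ + ‖u‖^2 := norm_sub_sq_real v u
    have h2 : ⟪u, v - u⟫ = ⟪u, v⟫ - ⟪u, u⟫ := inner_sub_right _ _ _
    have h3 : ⟪u, u⟫ = ‖u‖^2 := real_inner_self_eq_norm_sq u
    have h4 : ⟪u, v⟫ = ⟪v, u⟫ := real_inner_comm _ _
    linarith
  have hA₁ : ∀ u v : EuclideanSpace ℝ (Fin D), A₁ u + ⟪u, v - u⟫ + (1:ℝ)/2 * ‖v - u‖^2 ≤ A₁ v := hsq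
  have hB₁ : ∀ u v : EuclideanSpace ℝ (Fin D), B₁ u + ⟪g u, v - u⟫ + (0:ℝ)/2 * ‖v - u‖^2 ≤ B₁ v := by
    intro u v
    have := my_grad_ineq hconv (hg u) v
    simp only [hB₁def]
    linarith
  have hw₁ : ∀ t ∈ Ioo (0:ℝ) 1,
      (1-t) • (fun u : EuclideanSpace ℝ (Fin D) => u) (z₀ t) + t • g (z₀ t) = (1-t) • x₀ + t • x₁ := by
    intro t ht; simpa using hz t ht
  have hα₁ : (0:ℝ) ≤ 1 := zero_le_one
  have hβ₁ : (0:ℝ) ≤ 0 := le_refl 0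
  have hμ₁ : ∀ t ∈ Ioo (0:ℝ) 1, 0 < (1-t)*1 + t*0 := by
    intro t ht; nlinarith [ht.1, ht.2]
  have hAc₁ : Continuous A₁ := by
    rw [hA₁def]; exact (continuous_norm.pow 2).div_const 2
  have hMA₁ : ∀ u : EuclideanSpace ℝ (Fin D), ⟪x₀, u⟫ - A₁ u ≤ ‖x₀‖^2/2 := by
    intro u
    have h1 : (0:ℝ) ≤ ‖x₀ - u‖^2 := sq_nonneg _
    have h2 : ‖x₀ - u‖^2 = ‖x₀‖^2 - 2*⟪x₀, u⟫ + ‖u‖^2 := norm_sub_sq_real x₀ u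
    simp only [hA₁def]
    linarith
  have hMA₁' : ∀ c < ‖x₀‖^2/2, ∃ u : EuclideanSpace ℝ (Fin D), c < ⟪x₀, u⟫ - A₁ u := by
    intro c hc
    refine ⟨x₀, ?_⟩
    have h3 : ⟪x₀, x₀⟫ = ‖x₀‖^2 := real_inner_self_eq_norm_sq x₀
    simp only [hA₁def]
    linarith
  have hMB₁ : ∀ u : EuclideanSpace ℝ (Fin D), ⟪x₁, u⟫ - B₁ u ≤ Ψc x₁ := fun u => by
    have := (hconj x₁).1 ⟨u, rfl⟩
    simpa [hB₁def] using this
  have hMB₁' : ∀ c < Ψc x₁, ∃ u : EuclideanSpace ℝ (Fin D), c < ⟪x₁, u⟫ - B₁ u := by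
    intro c hc
    by_contra hcon
    push_neg at hcon
    have : Ψc x₁ ≤ c := by
      refine (hconj x₁).2 ?_
      rintro _ ⟨u, rfl⟩
      simpa [hB₁def] using hcon u
    linarith
  -- case 2 data
  let A₂ : EuclideanSpace ℝ (Fin D) → ℝ := Ψc
  have hA₂def : A₂ = Ψc := rfl
  let B₂ : EuclideanSpace ℝ (Fin D) → ℝ := fun u => ‖u‖^2/2
  have hB₂def : B₂ = fun u => ‖u‖^2/2 := rfl
  let w₂ : ℝ → EuclideanSpace ℝ (Fin D) := fun s => g (z₀ s)
  have hw₂def : w₂ = fun s => g (z₀ s) := rfl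
  have hA₂ : ∀ u v : EuclideanSpace ℝ (Fin D), A₂ u + ⟪gc u, v - u⟫ + (0:ℝ)/2 * ‖v - u‖^2 ≤ A₂ v := by
    intro u v
    have := my_grad_ineq hΨcconv (hgc u) v
    simp only [hA₂def]
    linarith
  have hB₂ : ∀ u v : EuclideanSpace ℝ (Fin D), B₂ u + ⟪u, v - u⟫ + (1:ℝ)/2 * ‖v - u‖^2 ≤ B₂ v := hsq
  have hw₂ : ∀ t ∈ Ioo (0:ℝ) 1,
      (1-t) • gc (w₂ t) + t • (fun u : EuclideanSpace ℝ (Fin D) => u) (w₂ t) = (1-t) • x₀ + t • x₁ := by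
    intro t ht
    simp only [hw₂def, hgcg (z₀ t)]
    simpa using hz t ht
  have hμ₂ : ∀ t ∈ Ioo (0:ℝ) 1, 0 < (1-t)*0 + t*1 := by
    intro t ht; nlinarith [ht.1, ht.2]
  have hMA₂ : ∀ u : EuclideanSpace ℝ (Fin D), ⟪x₀, u⟫ - A₂ u ≤ Ψ x₀ := by
    intro u
    have h1 : ⟪u, x₀⟫ - Ψ x₀ ≤ Ψc u := by
      have := (hconj u).1 ⟨x₀, rfl⟩
      simpa using this
    have h2 : ⟪x₀, u⟫ = ⟪u, x₀⟫ := real_inner_comm _ _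
    simp only [hA₂def]
    linarith
  have hMA₂' : ∀ c < Ψ x₀, ∃ u : EuclideanSpace ℝ (Fin D), c < ⟪x₀, u⟫ - A₂ u := by
    intro c hc
    refine ⟨g x₀, ?_⟩
    have h1 : Ψc (g x₀) = ⟪g x₀, x₀⟫ - Ψ x₀ := hfen x₀
    have h2 : ⟪x₀, g x₀⟫ = ⟪g x₀, x₀⟫ := real_inner_comm _ _
    simp only [hA₂def]
    linarith
  have hMB₂ : ∀ u : EuclideanSpace ℝ (Fin D), ⟪x₁, u⟫ - B₂ u ≤ ‖x₁‖^2/2 := by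
    intro u
    have h1 : (0:ℝ) ≤ ‖x₁ - u‖^2 := sq_nonneg _
    have h2 : ‖x₁ - u‖^2 = ‖x₁‖^2 - 2*⟪x₁, u⟫ + ‖u‖^2 := norm_sub_sq_real x₁ u
    simp only [hB₂def]
    linarith
  have hMB₂' : ∀ c < ‖x₁‖^2/2, ∃ u : EuclideanSpace ℝ (Fin D), c < ⟪x₁, u⟫ - B₂ u := by
    intro c hc
    refine ⟨x₁, ?_⟩
    have h3 : ⟪x₁, x₁⟫ = ‖x₁‖^2 := real_inner_self_eq_norm_sq x₁
    simp only [hB₂def]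
    linarith
  have hBc₂ : Continuous B₂ := by
    rw [hB₂def]; exact (continuous_norm.pow 2).div_const 2
  -- the pointwise identity
  have hq_id : ∀ t : ℝ, q t = 2 * envS A₁ B₁ x₀ x₁ z₀ t - 2 * envS A₂ B₂ x₀ x₁ w₂ t
      + ‖x₁ - x₀‖^2 := by
    intro t
    have h1 : ‖(g (z₀ t) - z₀ t) - (x₁ - x₀)‖^2
        = ‖g (z₀ t) - z₀ t‖^2 - 2*⟪g (z₀ t) - z₀ t, x₁ - x₀⟫ + ‖x₁ - x₀‖^2 :=
      norm_sub_sq_real _ _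
    have h2 : ‖g (z₀ t) - z₀ t‖^2 = ‖g (z₀ t)‖^2 - 2*⟪g (z₀ t), z₀ t⟫ + ‖z₀ t‖^2 :=
      norm_sub_sq_real _ _
    have h3 : ⟪g (z₀ t) - z₀ t, x₁ - x₀⟫
        = ⟪g (z₀ t), x₁⟫ - ⟪g (z₀ t), x₀⟫ - ⟪z₀ t, x₁⟫ + ⟪z₀ t, x₀⟫ := by
      rw [inner_sub_left, inner_sub_right, inner_sub_right]; ring
    have c1 : ⟪g (z₀ t), x₁⟫ = ⟪x₁, g (z₀ t)⟫ := real_inner_comm _ _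
    have c2 : ⟪g (z₀ t), x₀⟫ = ⟪x₀, g (z₀ t)⟫ := real_inner_comm _ _
    have c3 : ⟪z₀ t, x₁⟫ = ⟪x₁, z₀ t⟫ := real_inner_comm _ _
    have c4 : ⟪z₀ t, x₀⟫ = ⟪x₀, z₀ t⟫ := real_inner_comm _ _
    have hf : Ψc (g (z₀ t)) = ⟪g (z₀ t), z₀ t⟫ - Ψ (z₀ t) := hfen (z₀ t)
    simp only [hqdef, envS, hA₁def, hB₁def, hA₂def, hB₂def, hw₂def]
    linarith
  -- derivative of Θ
  set c₀ : ℝ := ‖x₁ - x₀‖^2 with hc₀def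
  set Θ : ℝ → ℝ := fun t => 2 * envF A₁ B₁ x₀ x₁ z₀ t - 2 * envF A₂ B₂ x₀ x₁ w₂ t + t * c₀
    with hΘdef
  have hΘd : ∀ t ∈ Ioo (0:ℝ) 1, HasDerivAt Θ (q t) t := by
    intro t ht
    have hd1 : HasDerivAt (envF A₁ B₁ x₀ x₁ z₀) (envS A₁ B₁ x₀ x₁ z₀ t) t :=
      env_hasDerivAt hA₁ hB₁ hw₁ hα₁ hβ₁ hμ₁ hAc₁ hΨcont ht
    have hd2 : HasDerivAt (envF A₂ B₂ x₀ x₁ w₂) (envS A₂ B₂ x₀ x₁ w₂ t) t :=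
      env_hasDerivAt hA₂ hB₂ hw₂ hβ₁ hα₁ hμ₂ hΨccont hBc₂ ht
    have hd3 : HasDerivAt (fun t : ℝ => t * c₀) c₀ t := hasDerivAt_mul_const c₀
    have := ((hd1.const_mul 2).sub (hd2.const_mul 2)).add hd3
    rw [hΘdef]
    rw [hq_id t]
    exact this
  -- continuity of q on Ioo 0 1
  have hz₀cont : ∀ t ∈ Ioo (0:ℝ) 1, ContinuousAt z₀ t := fun t ht =>
    env_w_cont hA₁ hB₁ hw₁ hα₁ hβ₁ hμ₁ ht
  have hw₂cont : ∀ t ∈ Ioo (0:ℝ) 1, ContinuousAt w₂ t := fun t ht =>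
    env_w_cont hA₂ hB₂ hw₂ hβ₁ hα₁ hμ₂ ht
  have hqc : ContinuousOn q (Ioo (0:ℝ) 1) := by
    intro t ht
    have h1 : ContinuousAt q t := by
      have : ContinuousAt (fun s => (g (z₀ s) - z₀ s) - (x₁ - x₀)) t :=
        (((hw₂cont t ht).sub (hz₀cont t ht)).sub continuousAt_const)
      exact (this.norm.pow 2)
    exact h1.continuousWithinAt
  -- sequences
  let a : ℕ → ℝ := fun n => 1/((n:ℝ)+2)
  have hadef : ∀ n, a n = 1/((n:ℝ)+2) := fun n => rfl
  let b : ℕ → ℝ := fun n => 1 - 1/((n:ℝ)+2)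
  have hbdef : ∀ n, b n = 1 - 1/((n:ℝ)+2) := fun n => rfl
  have hc2 : Tendsto (fun n : ℕ => ((n:ℝ)+2)) atTop atTop :=
    tendsto_atTop_add_const_right _ 2 tendsto_natCast_atTop_atTop
  have ha : Tendsto a atTop (𝓝 0) := by
    rw [show a = fun n : ℕ => (((n:ℝ)+2))⁻¹ by funext n; rw [hadef n, one_div]]
    exact hc2.inv_tendsto_atTop
  have hb : Tendsto b atTop (𝓝 1) := by
    have h : Tendsto (fun n : ℕ => (1:ℝ) - a n) atTop (𝓝 (1 - 0)) :=
      tendsto_const_nhds.sub ha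
    rw [show b = fun n : ℕ => 1 - a n by funext n; rw [hbdef n, hadef n]]
    simpa using h
  have hbound : ∀ n : ℕ, 0 < a n ∧ a n ≤ 1/2 ∧ 1/2 ≤ b n ∧ b n < 1 := by
    intro n
    have hnn : (0:ℝ) ≤ (n:ℝ) := Nat.cast_nonneg n
    have h2 : (2:ℝ) ≤ (n:ℝ)+2 := by linarith
    have hpos : (0:ℝ) < (n:ℝ)+2 := by linarith
    have h1 : 1/((n:ℝ)+2) ≤ 1/2 :=
      one_div_le_one_div_of_le (by norm_num) h2
    have h0 : 0 < 1/((n:ℝ)+2) := by positivity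
    refine ⟨by rw [hadef n]; exact h0, by rw [hadef n]; exact h1, ?_, ?_⟩
    · rw [hbdef n]; linarith
    · rw [hbdef n]; linarith
  have han : ∀ n, a n ∈ Ioo (0:ℝ) 1 := by
    intro n
    obtain ⟨h0, h1, h2, h3⟩ := hbound n
    exact ⟨h0, lt_of_le_of_lt h1 (by norm_num)⟩
  have hbn : ∀ n, b n ∈ Ioo (0:ℝ) 1 := by
    intro n
    obtain ⟨h0, h1, h2, h3⟩ := hbound n
    exact ⟨lt_of_lt_of_le one_half_pos h2, h3⟩
  have hab : ∀ n, a n ≤ b n := by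
    intro n
    obtain ⟨h0, h1, h2, h3⟩ := hbound n
    exact le_trans h1 h2
  have hsubIoo : ∀ n, Icc (a n) (b n) ⊆ Ioo (0:ℝ) 1 := by
    intro n x hx
    exact ⟨lt_of_lt_of_le (han n).1 hx.1, lt_of_le_of_lt hx.2 (hbn n).2⟩
  -- FTC on subintervals
  have hFTC : ∀ n, ∫ t in (a n)..(b n), q t = Θ (b n) - Θ (a n) := by
    intro n
    have huIcc : uIcc (a n) (b n) = Icc (a n) (b n) := uIcc_of_le (hab n)
    apply intervalIntegral.integral_eq_sub_of_hasDerivAt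
    · intro x hx
      rw [huIcc] at hx
      exact hΘd x (hsubIoo n hx)
    · apply ContinuousOn.intervalIntegrable
      rw [huIcc]
      exact hqc.mono (hsubIoo n)
  -- limits of Θ at endpoints
  have haIoo : Tendsto a atTop (𝓝[Ioo (0:ℝ) 1] 0) :=
    tendsto_nhdsWithin_of_tendsto_nhds_of_eventually_within _ ha
      (Eventually.of_forall han)
  have hbIoo : Tendsto b atTop (𝓝[Ioo (0:ℝ) 1] 1) :=
    tendsto_nhdsWithin_of_tendsto_nhds_of_eventually_within _ hb
      (Eventually.of_forall hbn)
  have hF₁0 : Tendsto (envF A₁ B₁ x₀ x₁ z₀) (𝓝[Ioo (0:ℝ) 1] 0) (𝓝 (‖x₀‖^2/2)) :=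
    env_tendsto_zero hA₁ hB₁ hw₁ hα₁ hβ₁ hMA₁ hMA₁' hMB₁
  have hF₁1 : Tendsto (envF A₁ B₁ x₀ x₁ z₀) (𝓝[Ioo (0:ℝ) 1] 1) (𝓝 (Ψc x₁)) :=
    env_tendsto_one hA₁ hB₁ hw₁ hα₁ hβ₁ hMA₁ hMB₁ hMB₁'
  have hF₂0 : Tendsto (envF A₂ B₂ x₀ x₁ w₂) (𝓝[Ioo (0:ℝ) 1] 0) (𝓝 (Ψ x₀)) :=
    env_tendsto_zero hA₂ hB₂ hw₂ hβ₁ hα₁ hMA₂ hMA₂' hMB₂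
  have hF₂1 : Tendsto (envF A₂ B₂ x₀ x₁ w₂) (𝓝[Ioo (0:ℝ) 1] 1) (𝓝 (‖x₁‖^2/2)) :=
    env_tendsto_one hA₂ hB₂ hw₂ hβ₁ hα₁ hMA₂ hMB₂ hMB₂'
  have hΘa : Tendsto (fun n => Θ (a n)) atTop (𝓝 (2*(‖x₀‖^2/2) - 2*(Ψ x₀) + 0*c₀)) := by
    have h1 := (hF₁0.comp haIoo).const_mul 2
    have h2 := (hF₂0.comp haIoo).const_mul 2
    have h3 := ha.mul_const c₀
    exact (h1.sub h2).add h3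
  have hΘb : Tendsto (fun n => Θ (b n)) atTop (𝓝 (2*(Ψc x₁) - 2*(‖x₁‖^2/2) + 1*c₀)) := by
    have h1 := (hF₁1.comp hbIoo).const_mul 2
    have h2 := (hF₂1.comp hbIoo).const_mul 2
    have h3 := hb.mul_const c₀
    exact (h1.sub h2).add h3
  set C : ℝ := 2 * (Ψ x₀ + Ψc x₁ - ⟪x₀, x₁⟫) with hCdef
  have hCV : (2*(Ψc x₁) - 2*(‖x₁‖^2/2) + 1*c₀) - (2*(‖x₀‖^2/2) - 2*(Ψ x₀) + 0*c₀) = C := by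
    have h1 : ‖x₁ - x₀‖^2 = ‖x₁‖^2 - 2*⟪x₁, x₀⟫ + ‖x₀‖^2 := norm_sub_sq_real x₁ x₀
    have h2 : ⟪x₁, x₀⟫ = ⟪x₀, x₁⟫ := real_inner_comm _ _
    rw [hCdef, hc₀def]
    linarith
  have hI : Tendsto (fun n => ∫ t in (a n)..(b n), q t) atTop (𝓝 C) := by
    have := hΘb.sub hΘa
    rw [hCV] at this
    exact this.congr fun n => (hFTC n).symm
  -- integrability on Ioc 0 1
  have hqnn : ∀ x, 0 ≤ q x := fun x => by simp only [hqdef]; positivity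
  have hfi : ∀ n, IntegrableOn q (Ioc (a n) (b n)) := by
    intro n
    exact ((hqc.mono (hsubIoo n)).integrableOn_Icc).mono_set Ioc_subset_Icc_self
  have hqint : IntegrableOn q (Ioc (0:ℝ) 1) := by
    apply MeasureTheory.integrableOn_Ioc_of_intervalIntegral_norm_bounded hfi ha hb
    filter_upwards [hI.eventually_le_const (show C < C+1 by linarith)] with n hn
    have he : ∀ x, ‖q x‖ = q x := fun x => Real.norm_of_nonneg (hqnn x)
    calc ∫ x in Ioc (a n) (b n), ‖q x‖ = ∫ x in Ioc (a n) (b n), q x := by simp [he]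
      _ = ∫ t in (a n)..(b n), q t := (intervalIntegral.integral_of_le (hab n)).symm
      _ ≤ C + 1 := hn
  -- pass to the limit
  have hIocsub : ∀ n, Ioc (a n) (b n) ⊆ Ioc (0:ℝ) 1 := by
    intro n x hx
    exact ⟨lt_trans (han n).1 hx.1, le_trans hx.2 (le_of_lt (hbn n).2)⟩
  have hcov : AECover (volume.restrict (Ioc (0:ℝ) 1)) atTop (fun n => Ioc (a n) (b n)) :=
    MeasureTheory.aecover_Ioc_of_Ioc ha hb
  have hlim := hcov.integral_tendsto_of_countably_generated hqint
  have h1 : Tendsto (fun n => ∫ x in Ioc (a n) (b n), q x) atTop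
      (𝓝 (∫ x in Ioc (0:ℝ) 1, q x)) := by
    refine hlim.congr fun n => ?_
    rw [Measure.restrict_restrict measurableSet_Ioc,
      inter_eq_self_of_subset_left (hIocsub n)]
  have h2 : Tendsto (fun n => ∫ x in Ioc (a n) (b n), q x) atTop (𝓝 C) :=
    hI.congr fun n => intervalIntegral.integral_of_le (hab n)
  have hfinal : ∫ x in Ioc (0:ℝ) 1, q x = C := tendsto_nhds_unique h1 h2
  rw [intervalIntegral.integral_of_le (zero_le_one)]
  exact hfinal
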